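/- Let g : ℝ → ℝ be four times continuously differentiable on a neighborhood of l with g(l) = 0 and g'(l) ≠ 0. Define Θ(x) = x - g(x)/g'(l) + g(x)²·g''(l)/(2·g'(l)³) - g(x)³·(3·g''(l)² - g'(l)·g'''(l))/(6·g'(l)⁵). Then there exist C > 0 and δ > 0 such that for all x with |x - l| < δ, |Θ(x) - l| ≤ C·|x - l|⁴. -/

import Mathlib

open Filter Metric Set Topology

private lemma contDiffAt_deriv_aux {n : ℕ} {f : ℝ → ℝ} {x : ℝ}
    (hf : ContDiffAt ℝ (n + 1) f x) : ContDiffAt ℝ n (deriv f) x := by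
  have h := hf.eventually (by simp)
  rw [Metric.eventually_nhds_iff] at h
  obtain ⟨ε, hε, hb⟩ := h
  have hon : ContDiffOn ℝ (n + 1) f (Metric.ball x ε) := fun y hy =>
    (hb (by simpa [Metric.mem_ball] using hy)).contDiffWithinAt
  have := hon.deriv_of_isOpen Metric.isOpen_ball (le_refl _)
  exact this.contDiffAt (Metric.isOpen_ball.mem_nhds (Metric.mem_ball_self hε))

private lemma key_lemma (n : ℕ) (h : ℝ → ℝ) (l : ℝ) (hh : ContDiffAt ℝ n h l)
    (hd : ∀ k < n, iteratedDeriv k h l = 0) :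
    ∃ C > 0, ∃ δ > 0, ∀ x : ℝ, |x - l| < δ → |h x| ≤ C * |x - l| ^ n := by
  induction n generalizing h with
  | zero =>
    refine ⟨|h l| + 1, by positivity, ?_⟩
    have := hh.continuousAt
    have h2 : ∀ᶠ y in 𝓝 l, |h y - h l| < 1 := by
      have := Metric.tendsto_nhds.1 this.tendsto 1 one_pos
      simpa [Real.dist_eq] using this
    rw [Metric.eventually_nhds_iff] at h2
    obtain ⟨ε, hε, hb⟩ := h2
    refine ⟨ε, hε, fun x hx => ?_⟩
    have := hb (show dist x l < ε by simpa [Real.dist_eq] using hx)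
    have : |h x| ≤ |h x - h l| + |h l| := by
      calc |h x| = |(h x - h l) + h l| := by ring_nf
      _ ≤ |h x - h l| + |h l| := abs_add_le _ _
    simp only [pow_zero, mul_one]
    linarith [hb (show dist x l < ε by simpa [Real.dist_eq] using hx)]
  | succ n ih =>
    have hh' : ContDiffAt ℝ n (deriv h) l := contDiffAt_deriv_aux (by exact_mod_cast hh)
    have hd' : ∀ k < n, iteratedDeriv k (deriv h) l = 0 := fun k hk => by
      rw [← iteratedDeriv_succ']; exact hd (k + 1) (by omega)
    obtain ⟨C, hC, δ, hδ, hbound⟩ := ih (deriv h) hh' hd'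
    have hdiff : ∀ᶠ y in 𝓝 l, DifferentiableAt ℝ h y :=
      (hh.eventually (by simp)).mono fun y hy => hy.differentiableAt (by simp)
    rw [Metric.eventually_nhds_iff] at hdiff
    obtain ⟨ε, hε, hball⟩ := hdiff
    refine ⟨C, hC, min δ ε, lt_min hδ hε, fun x hx => ?_⟩
    have h0 : h l = 0 := by simpa using hd 0 (Nat.succ_pos n)
    set r := |x - l| with hr
    have hr0 : 0 ≤ r := abs_nonneg _
    have hrδ : r < δ := lt_of_lt_of_le hx (min_le_left _ _)
    have hrε : r < ε := lt_of_lt_of_le hx (min_le_right _ _)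
    have key := Convex.norm_image_sub_le_of_norm_hasDerivWithin_le
      (f := h) (f' := deriv h) (s := Metric.closedBall l r) (C := C * r ^ n)
      (fun y hy => ((hball (y := y) (by
        rw [Metric.mem_closedBall] at hy; exact lt_of_le_of_lt hy hrε)).hasDerivAt.hasDerivWithinAt))
      (fun y hy => by
        rw [Metric.mem_closedBall, Real.dist_eq] at hy
        have h1 : |deriv h y| ≤ C * |y - l| ^ n := hbound y (lt_of_le_of_lt hy hrδ)
        have h2 : |y - l| ^ n ≤ r ^ n := pow_le_pow_left₀ (abs_nonneg _) hy n
        calc ‖deriv h y‖ = |deriv h y| := rfl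
        _ ≤ C * |y - l| ^ n := h1
        _ ≤ C * r ^ n := by nlinarith)
      (convex_closedBall l r)
      (Metric.mem_closedBall_self hr0)
      (by rw [Metric.mem_closedBall, Real.dist_eq])
    rw [h0, sub_zero, Real.norm_eq_abs, Real.norm_eq_abs, ← hr] at key
    calc |h x| ≤ C * r ^ n * r := key
    _ = C * r ^ (n + 1) := by ring

theorem stmt_7 (g : ℝ → ℝ) (l : ℝ) (hg : ContDiffAt ℝ 4 g l)
    (hgl : g l = 0) (hg' : deriv g l ≠ 0) :
    ∃ C > 0, ∃ δ > 0, ∀ x : ℝ, |x - l| < δ →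
      |(x - g x / deriv g l + g x ^ 2 * iteratedDeriv 2 g l / (2 * (deriv g l) ^ 3)
        - g x ^ 3 * (3 * (iteratedDeriv 2 g l) ^ 2 - deriv g l * iteratedDeriv 3 g l)
          / (6 * (deriv g l) ^ 5)) - l| ≤ C * |x - l| ^ 4 := by
  set a := deriv g l with ha
  set b := iteratedDeriv 2 g l with hb
  set c := iteratedDeriv 3 g l with hcc
  set d := 3 * b ^ 2 - a * c with hd
  have hb' : b = deriv (deriv g) l := by
    rw [hb, show (2 : ℕ) = 1 + 1 from rfl, iteratedDeriv_succ, iteratedDeriv_one]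
  have hc' : c = deriv (deriv (deriv g)) l := by
    rw [hcc, show (3 : ℕ) = 1 + 1 + 1 from rfl, iteratedDeriv_succ, iteratedDeriv_succ,
      iteratedDeriv_one]
  -- neighborhood where g is C^4
  have hev : ∀ᶠ y in 𝓝 l, ContDiffAt ℝ 4 g y := hg.eventually (by simp)
  rw [Metric.eventually_nhds_iff] at hev
  obtain ⟨ε, hε, hballg⟩ := hev
  set U := Metric.ball l ε with hU
  have hUo : IsOpen U := Metric.isOpen_ball
  have hlU : l ∈ U := Metric.mem_ball_self hε
  have hgU : ContDiffOn ℝ 4 g U := fun y hy =>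
    (hballg (by simpa [hU, Metric.mem_ball] using hy)).contDiffWithinAt
  have hg1U : ContDiffOn ℝ 3 (deriv g) U := hgU.deriv_of_isOpen hUo (by norm_num)
  have hg2U : ContDiffOn ℝ 2 (deriv (deriv g)) U := hg1U.deriv_of_isOpen hUo (by norm_num)
  have hg3U : ContDiffOn ℝ 1 (deriv (deriv (deriv g))) U := hg2U.deriv_of_isOpen hUo (by norm_num)
  have Hg : ∀ y ∈ U, HasDerivAt g (deriv g y) y := fun y hy =>
    ((hgU.contDiffAt (hUo.mem_nhds hy)).differentiableAt (by norm_num)).hasDerivAt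
  have Hg1 : ∀ y ∈ U, HasDerivAt (deriv g) (deriv (deriv g) y) y := fun y hy =>
    ((hg1U.contDiffAt (hUo.mem_nhds hy)).differentiableAt (by norm_num)).hasDerivAt
  have Hg2 : ∀ y ∈ U, HasDerivAt (deriv (deriv g)) (deriv (deriv (deriv g)) y) y := fun y hy =>
    ((hg2U.contDiffAt (hUo.mem_nhds hy)).differentiableAt (by norm_num)).hasDerivAt
  set h : ℝ → ℝ := fun x =>
    x - g x / a + g x ^ 2 * b / (2 * a ^ 3) - g x ^ 3 * d / (6 * a ^ 5) - l with hh_def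
  set h1 : ℝ → ℝ := fun y =>
    1 - deriv g y / a + 2 * g y * deriv g y * b / (2 * a ^ 3)
      - 3 * g y ^ 2 * deriv g y * d / (6 * a ^ 5) with hh1
  set h2 : ℝ → ℝ := fun y =>
    -(deriv (deriv g) y) / a
      + (2 * deriv g y ^ 2 + 2 * g y * deriv (deriv g) y) * b / (2 * a ^ 3)
      - (6 * g y * deriv g y ^ 2 + 3 * g y ^ 2 * deriv (deriv g) y) * d / (6 * a ^ 5) with hh2
  have E1 : ∀ y ∈ U, HasDerivAt h (h1 y) y := fun y hy => by
    have H := (((((hasDerivAt_id y).sub (((Hg y hy).div_const a))).add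
      ((((Hg y hy).pow 2).mul_const b).div_const (2 * a ^ 3))).sub
      ((((Hg y hy).pow 3).mul_const d).div_const (6 * a ^ 5))).sub_const l)
    refine H.congr_deriv ?_
    simp only [hh1]; ring
  have E2 : ∀ y ∈ U, HasDerivAt h1 (h2 y) y := fun y hy => by
    have H := ((((hasDerivAt_const y (1:ℝ)).sub ((Hg1 y hy).div_const a)).add
      (((((Hg y hy).const_mul 2).mul (Hg1 y hy)).mul_const b).div_const (2 * a ^ 3))).sub
      ((((((Hg y hy).pow 2).const_mul 3).mul (Hg1 y hy)).mul_const d).div_const (6 * a ^ 5)))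
    refine H.congr_deriv ?_
    simp only [hh2, Pi.pow_apply]; ring
  have E3 : HasDerivAt h2 (0 : ℝ) l := by
    have H := ((((Hg2 l hlU).neg).div_const a).add
      (((((Hg1 l hlU).pow 2).const_mul 2).add
        (((Hg l hlU).const_mul 2).mul (Hg2 l hlU))).mul_const b |>.div_const (2 * a ^ 3))).sub
      (((((Hg l hlU).const_mul 6).mul ((Hg1 l hlU).pow 2)).add
        ((((Hg l hlU).pow 2).const_mul 3).mul (Hg2 l hlU))).mul_const d |>.div_const (6 * a ^ 5))
    refine H.congr_deriv ?_
    simp only [Pi.pow_apply]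
    rw [hgl, ← ha, ← hb', ← hc', hd]
    field_simp
    ring
  -- now the iterated derivative computations
  have eq1 : deriv h =ᶠ[𝓝 l] h1 :=
    Filter.eventuallyEq_of_mem (hUo.mem_nhds hlU) fun y hy => (E1 y hy).deriv
  have eq2 : deriv (deriv h) =ᶠ[𝓝 l] h2 := by
    refine Filter.eventuallyEq_of_mem (hUo.mem_nhds hlU) fun y hy => ?_
    have e : deriv h =ᶠ[𝓝 y] h1 :=
      Filter.eventuallyEq_of_mem (hUo.mem_nhds hy) fun z hz => (E1 z hz).deriv
    rw [e.deriv_eq, (E2 y hy).deriv]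
  have i0 : iteratedDeriv 0 h l = 0 := by
    simp [hh_def, hgl]
  have i1 : iteratedDeriv 1 h l = 0 := by
    rw [iteratedDeriv_one, (E1 l hlU).deriv, hh1]
    simp only
    rw [hgl, ← ha]
    field_simp
    ring
  have i2 : iteratedDeriv 2 h l = 0 := by
    rw [show (2 : ℕ) = 1 + 1 from rfl, iteratedDeriv_succ, iteratedDeriv_one,
      eq1.deriv_eq, (E2 l hlU).deriv, hh2]
    simp only
    rw [hgl, ← ha, ← hb']
    field_simp
    ring
  have i3 : iteratedDeriv 3 h l = 0 := by
    rw [show (3 : ℕ) = 1 + 1 + 1 from rfl, iteratedDeriv_succ, iteratedDeriv_succ,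
      iteratedDeriv_one]
    have : deriv (deriv h) l = deriv (deriv h) l := rfl
    rw [show deriv (deriv (deriv h)) l = deriv h2 l from eq2.deriv_eq, E3.deriv]
  -- smoothness of h
  have hhc : ContDiffAt ℝ 4 h l := by
    rw [hh_def]
    exact ((((contDiffAt_id.sub (hg.div_const a)).add
      (((hg.pow 2).mul contDiffAt_const).div_const (2 * a ^ 3))).sub
      (((hg.pow 3).mul contDiffAt_const).div_const (6 * a ^ 5))).sub contDiffAt_const)
  obtain ⟨C, hC, δ, hδ, hcl⟩ := key_lemma 4 h l (by exact_mod_cast hhc)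
    (by intro k hk; interval_cases k
        · exact i0
        · exact i1
        · exact i2
        · exact i3)
  exact ⟨C, hC, δ, hδ, fun x hx => hcl x hx⟩
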